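/- Let δ ∈ (0,1) and take d = 2 (cubic polynomials). Then the polynomial q_{2,δ} maximizes the derivative at the origin over the class P_{2,δ}: for every p ∈ P_{2,δ}, q'_{2,δ}(0) ≥ p'(0). -/

import Mathlib

/-- `oddPoly n α` is the odd polynomial `α 0 * x + α 1 * x^3 + ⋯ + α (n-1) * x^(2n-1)`.
The functions of this form are exactly the elements of the space `L_n` of odd
polynomials of degree at most `2n-1`. -/
noncomputable def oddPoly (n : ℕ) (α : ℕ → ℝ) : ℝ → ℝ :=
  fun x => ∑ i ∈ Finset.range n, α i * x ^ (2 * i + 1)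

/-- The uniform (Chebyshev) distance `‖f − g‖_{C[a,b]} = sup_{x ∈ [a,b]} |f x − g x|`. -/
noncomputable def unifErr (a b : ℝ) (f g : ℝ → ℝ) : ℝ :=
  sSup ((fun x => |f x - g x|) '' Set.Icc a b)

/-- `epsVal n a b = ε(n,a,b)`, the least possible uniform deviation of an element of
`L_n` from the constant function `1` on `[a,b]`. -/
noncomputable def epsVal (n : ℕ) (a b : ℝ) : ℝ :=
  sInf (Set.range fun α : ℕ → ℝ => unifErr a b (fun _ => (1:ℝ)) (oddPoly n α))

/-- The class `𝒫_{d,δ}`: odd polynomials `p` of degree `2d−1` for which there exists a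
witness `a ∈ (0, 1−δ)` with `p(a) = 1−δ`, `p([a, 1+δ]) ⊆ [1−δ, 1+δ]`, and
`p([0,a]) ⊆ [0, 1−δ]`. -/
def PClass (d : ℕ) (δ : ℝ) (p : ℝ → ℝ) : Prop :=
  (∃ α : ℕ → ℝ, p = oddPoly d α) ∧
  ∃ a ∈ Set.Ioo (0:ℝ) (1 - δ), p a = 1 - δ ∧
    (∀ x ∈ Set.Icc a (1 + δ), p x ∈ Set.Icc (1 - δ) (1 + δ)) ∧
    (∀ x ∈ Set.Icc (0:ℝ) a, p x ∈ Set.Icc (0:ℝ) (1 - δ))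

open Set

lemma oddPoly_two (β : ℕ → ℝ) : oddPoly 2 β = fun x => β 0 * x + β 1 * x^3 := by
  funext x; simp [oddPoly, Finset.sum_range_succ]

lemma oddPoly_cont (β : ℕ → ℝ) : Continuous (oddPoly 2 β) := by
  rw [oddPoly_two]; continuity

lemma hasDerivAt_cubic (c d x : ℝ) :
    HasDerivAt (fun y : ℝ => c * y + d * y^3) (c + d * (3 * x^2)) x := by
  have h1 : HasDerivAt (fun y : ℝ => c * y) (c * 1) x := (hasDerivAt_id x).const_mul c
  have h2 : HasDerivAt (fun y : ℝ => d * y^3) (d * (↑3 * x^(3-1))) x :=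
    (hasDerivAt_pow 3 x).const_mul d
  rw [show c + d * (3 * x^2) = c * 1 + d * (((3:ℕ):ℝ) * x^(3-1)) by norm_num]
  exact h1.add h2

lemma deriv_oddPoly_two (β : ℕ → ℝ) : deriv (oddPoly 2 β) 0 = β 0 := by
  rw [oddPoly_two]
  have := (hasDerivAt_cubic (β 0) (β 1) 0).deriv
  simpa using this

/-- The key elementary inequality: if an odd cubic is ≤ another at `x1 > 0` and ≥ at
`x2 > x1`, then its linear coefficient is at most the other's. -/
lemma core_ineq (b0 b1 a0 a1 x1 x2 : ℝ) (h1 : 0 < x1) (h12 : x1 < x2)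
    (hle1 : b0*x1 + b1*x1^3 ≤ a0*x1 + a1*x1^3)
    (hge2 : a0*x2 + a1*x2^3 ≤ b0*x2 + b1*x2^3) : b0 ≤ a0 := by
  have hx2 : 0 < x2 := h1.trans h12
  set c := b0 - a0 with hc
  set d := b1 - a1 with hd
  have e1 : c*x1 + d*x1^3 ≤ 0 := by rw [hc, hd]; nlinarith [hle1]
  have e2 : 0 ≤ c*x2 + d*x2^3 := by rw [hc, hd]; nlinarith [hge2]
  have hsq : 0 < x2^2 - x1^2 := by nlinarith
  have hpos : 0 < x1 * x2 * (x2^2 - x1^2) := mul_pos (mul_pos h1 hx2) hsq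
  have hdpos : 0 ≤ d := by
    have k1 := mul_le_mul_of_nonneg_left e1 hx2.le
    have k2 := mul_le_mul_of_nonneg_left e2 h1.le
    have key : 0 ≤ d * (x1 * x2 * (x2^2 - x1^2)) := by nlinarith
    exact nonneg_of_mul_nonneg_right (by linarith [key] : 0 ≤ x1 * x2 * (x2^2 - x1^2) * d) hpos
  have : c ≤ 0 := by nlinarith [mul_nonneg hdpos (pow_pos h1 3).le]
  linarith

lemma bddBelow_range_unifErr (a b : ℝ) :
    BddBelow (Set.range fun β : ℕ → ℝ => unifErr a b (fun _ => (1:ℝ)) (oddPoly 2 β)) := by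
  refine ⟨0, ?_⟩
  rintro y ⟨β, rfl⟩
  refine Real.sSup_nonneg ?_
  rintro z ⟨x, hx, rfl⟩; positivity

/-- The optimal polynomial stays within `δ` of `1` on the whole interval. -/
lemma pointwise_bound (δ a : ℝ) (hab : a < 1+δ)
    (haeps : epsVal 2 a (1+δ) = δ) (α : ℕ → ℝ)
    (hbest : ∀ β : ℕ → ℝ,
      unifErr a (1+δ) (fun _ => (1:ℝ)) (oddPoly 2 α)
        ≤ unifErr a (1+δ) (fun _ => (1:ℝ)) (oddPoly 2 β)) :
    ∀ x ∈ Icc a (1+δ), |1 - oddPoly 2 α x| ≤ δ := by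
  have hcont : Continuous fun x => |(fun _ => (1:ℝ)) x - oddPoly 2 α x| :=
    (continuous_const.sub (oddPoly_cont α)).abs
  have hbdd : BddAbove ((fun x => |(fun _ => (1:ℝ)) x - oddPoly 2 α x| ) '' Icc a (1+δ)) :=
    (isCompact_Icc.image hcont).bddAbove
  have h2 : unifErr a (1+δ) (fun _ => (1:ℝ)) (oddPoly 2 α) ≤ epsVal 2 a (1+δ) :=
    le_csInf ⟨_, ⟨α, rfl⟩⟩ (by rintro y ⟨β, rfl⟩; exact hbest β)
  rw [haeps] at h2
  intro x hx
  have h3 : |(fun _ => (1:ℝ)) x - oddPoly 2 α x|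
      ≤ unifErr a (1+δ) (fun _ => (1:ℝ)) (oddPoly 2 α) := le_csSup hbdd ⟨x, hx, rfl⟩
  simpa using h3.trans h2

/-- If some odd cubic `g` is positive on the set where the error is `+δ` and negative
on the set where the error is `-δ`, then a small perturbation strictly decreases the
uniform error, contradicting the optimality `epsVal = δ`. -/
lemma sep_lemma (δ a : ℝ) (hδ0 : 0 < δ) (hab : a < 1+δ)
    (haeps : epsVal 2 a (1+δ) = δ) (α : ℕ → ℝ)
    (hpt : ∀ x ∈ Icc a (1+δ), |1 - oddPoly 2 α x| ≤ δ)
    (γ : ℕ → ℝ)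
    (Hp : ∀ x ∈ Icc a (1+δ), 1 - oddPoly 2 α x = δ → 0 < oddPoly 2 γ x)
    (Hm : ∀ x ∈ Icc a (1+δ), 1 - oddPoly 2 α x = -δ → oddPoly 2 γ x < 0) : False := by
  set q := oddPoly 2 α with hq
  set g := oddPoly 2 γ with hg
  set K := Icc a (1+δ) with hK
  have hKne : K.Nonempty := nonempty_Icc.mpr hab.le
  have hKcp : IsCompact K := isCompact_Icc
  have cq : Continuous q := oddPoly_cont α
  have cg : Continuous g := oddPoly_cont γ
  have ce : Continuous fun x => 1 - q x := continuous_const.sub cq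
  have hm1 : ∃ m1 < δ, ∀ x ∈ K, g x ≤ 0 → 1 - q x ≤ m1 := by
    set KP := K ∩ {x | g x ≤ 0} with hKP
    have hKPc : IsCompact KP := hKcp.inter_right (isClosed_le cg continuous_const)
    by_cases hne : KP.Nonempty
    · obtain ⟨y, hy, hmax⟩ := hKPc.exists_isMaxOn hne ce.continuousOn
      refine ⟨1 - q y, ?_, ?_⟩
      · rcases lt_or_eq_of_le (abs_le.mp (hpt y hy.1)).2 with h | h
        · linarith
        · exact absurd (Hp y hy.1 (by linarith)) (not_lt.mpr hy.2)
      · intro x hx hgx; exact hmax ⟨hx, hgx⟩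
    · exact ⟨0, hδ0, fun x hx hgx => (hne ⟨x, hx, hgx⟩).elim⟩
  have hm2 : ∃ m2, -δ < m2 ∧ ∀ x ∈ K, 0 ≤ g x → m2 ≤ 1 - q x := by
    set KM := K ∩ {x | 0 ≤ g x} with hKM
    have hKMc : IsCompact KM := hKcp.inter_right (isClosed_le continuous_const cg)
    by_cases hne : KM.Nonempty
    · obtain ⟨y, hy, hmin⟩ := hKMc.exists_isMinOn hne ce.continuousOn
      refine ⟨1 - q y, ?_, ?_⟩
      · rcases lt_or_eq_of_le (abs_le.mp (hpt y hy.1)).1 with h | h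
        · linarith
        · exact absurd (Hm y hy.1 h.symm) (not_lt.mpr hy.2)
      · intro x hx hgx; exact hmin ⟨hx, hgx⟩
    · exact ⟨0, by linarith, fun x hx hgx => (hne ⟨x, hx, hgx⟩).elim⟩
  obtain ⟨m1, hm1lt, hm1b⟩ := hm1
  obtain ⟨m2, hm2lt, hm2b⟩ := hm2
  obtain ⟨y0, hy0K, hy0max⟩ := hKcp.exists_isMaxOn hKne cg.abs.continuousOn
  set G := |g y0| with hG
  have hG0 : 0 ≤ G := abs_nonneg _
  have hGb : ∀ x ∈ K, |g x| ≤ G := fun x hx => hy0max hx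
  set ε := min (δ - m1) (δ + m2) / (2 * (G + 1)) with hε
  have hε0 : 0 < ε := by
    apply div_pos (lt_min (by linarith) (by linarith)) (by linarith)
  have hεG1 : ε * G < δ - m1 := by
    have h1 : ε * (G+1) ≤ min (δ - m1) (δ + m2) / 2 := by
      rw [hε, div_mul_eq_mul_div, mul_comm]
      rw [div_le_div_iff₀ (by linarith) (by norm_num)]
      ring_nf
      nlinarith [lt_min (show (0:ℝ) < δ - m1 by linarith) (show (0:ℝ) < δ + m2 by linarith)]
    have := min_le_left (δ - m1) (δ + m2)
    nlinarith
  have hεG2 : ε * G < δ + m2 := by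
    have h1 : ε * (G+1) ≤ min (δ - m1) (δ + m2) / 2 := by
      rw [hε, div_mul_eq_mul_div, mul_comm]
      rw [div_le_div_iff₀ (by linarith) (by norm_num)]
      ring_nf
      nlinarith [lt_min (show (0:ℝ) < δ - m1 by linarith) (show (0:ℝ) < δ + m2 by linarith)]
    have := min_le_right (δ - m1) (δ + m2)
    nlinarith
  set αn : ℕ → ℝ := fun i => α i + ε * γ i with hαn
  have hqn : oddPoly 2 αn = fun x => q x + ε * g x := by
    rw [oddPoly_two, hq, hg, oddPoly_two, oddPoly_two]
    funext x; simp only [hαn]; ring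
  have hpw : ∀ x ∈ K, |1 - (q x + ε * g x)| < δ := by
    intro x hx
    rw [abs_lt]
    constructor
    · rcases le_or_gt 0 (g x) with h | h
      · have := hm2b x hx h
        have habs := (abs_le.mp (hGb x hx)).2
        nlinarith
      · have h1 : 1 - q x ≥ -δ := (abs_le.mp (hpt x hx)).1
        nlinarith
    · rcases le_or_gt (g x) 0 with h | h
      · have := hm1b x hx h
        have habs := (abs_le.mp (hGb x hx)).1
        nlinarith
      · have h1 : 1 - q x ≤ δ := (abs_le.mp (hpt x hx)).2
        nlinarith
  have hcont2 : Continuous fun x => |(fun _ => (1:ℝ)) x - oddPoly 2 αn x| :=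
    (continuous_const.sub (oddPoly_cont αn)).abs
  have himg : IsCompact ((fun x => |(fun _ => (1:ℝ)) x - oddPoly 2 αn x|) '' K) :=
    hKcp.image hcont2
  have himgne : ((fun x => |(fun _ => (1:ℝ)) x - oddPoly 2 αn x|) '' K).Nonempty :=
    hKne.image _
  obtain ⟨x0, hx0K, hx0⟩ := himg.sSup_mem himgne
  have hlt : unifErr a (1+δ) (fun _ => (1:ℝ)) (oddPoly 2 αn) < δ := by
    have heq : unifErr a (1+δ) (fun _ => (1:ℝ)) (oddPoly 2 αn)
        = |(fun _ => (1:ℝ)) x0 - oddPoly 2 αn x0| := hx0.symm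
    rw [heq]
    have := hpw x0 hx0K
    simp only [hqn]
    simpa using this
  have hle : epsVal 2 a (1+δ) ≤ unifErr a (1+δ) (fun _ => (1:ℝ)) (oddPoly 2 αn) :=
    csInf_le (bddBelow_range_unifErr a (1+δ)) ⟨αn, rfl⟩
  rw [haeps] at hle
  linarith

/-- The optimal polynomial attains the value `1+δ` somewhere. -/
lemma exists_hit_top (δ a : ℝ) (hδ0 : 0 < δ) (ha0 : 0 < a) (hab : a < 1+δ)
    (haeps : epsVal 2 a (1+δ) = δ) (α : ℕ → ℝ)
    (hpt : ∀ x ∈ Icc a (1+δ), |1 - oddPoly 2 α x| ≤ δ) :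
    ∃ v ∈ Icc a (1+δ), oddPoly 2 α v = 1+δ := by
  by_contra hcon
  push_neg at hcon
  refine sep_lemma δ a hδ0 hab haeps α hpt (fun i => if i = 0 then 1 else 0) ?_ ?_
  · intro x hx _
    rw [oddPoly_two]; simp
    linarith [hx.1]
  · intro x hx hex
    exact absurd (by linarith : oddPoly 2 α x = 1+δ) (hcon x hx)

/-- The optimal polynomial attains the value `1-δ` somewhere. -/
lemma exists_hit_bot (δ a : ℝ) (hδ0 : 0 < δ) (ha0 : 0 < a) (hab : a < 1+δ)
    (haeps : epsVal 2 a (1+δ) = δ) (α : ℕ → ℝ)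
    (hpt : ∀ x ∈ Icc a (1+δ), |1 - oddPoly 2 α x| ≤ δ) :
    ∃ u ∈ Icc a (1+δ), oddPoly 2 α u = 1-δ := by
  by_contra hcon
  push_neg at hcon
  refine sep_lemma δ a hδ0 hab haeps α hpt (fun i => if i = 0 then -1 else 0) ?_ ?_
  · intro x hx hex
    exact absurd (by linarith : oddPoly 2 α x = 1-δ) (hcon x hx)
  · intro x hx _
    rw [oddPoly_two]; simp
    linarith [hx.1]

/-- Any point where the optimum attains `1-δ` lies strictly left of any point where
it attains `1+δ`, provided the right endpoint value exceeds `1-δ`. -/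
lemma cubic_order (δ a a0 a1 v u : ℝ) (hδ0 : 0 < δ) (ha0 : 0 < a)
    (hv : v ∈ Icc a (1+δ)) (hu : u ∈ Icc a (1+δ))
    (hqv : a0*v + a1*v^3 = 1+δ) (hqu : a0*u + a1*u^3 = 1-δ)
    (hqb : 1-δ < a0*(1+δ) + a1*(1+δ)^3) : u < v := by
  by_contra hcon
  push_neg at hcon
  have hvu : v < u := by
    rcases lt_or_eq_of_le hcon with h | h
    · exact h
    · rw [h] at hqv; rw [hqv] at hqu; linarith
  have hub : u < 1+δ := by
    rcases lt_or_eq_of_le hu.2 with h | h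
    · exact h
    · rw [h] at hqu; linarith
  have hv0 : 0 < v := lt_of_lt_of_le ha0 hv.1
  set f : ℝ → ℝ := fun y => a0 * y + a1 * y^3 with hf
  have hder : ∀ s t : ℝ, s < t → ∃ w ∈ Ioo s t, a0 + a1 * (3*w^2) = (f t - f s)/(t - s) := by
    intro s t hst
    exact exists_hasDerivAt_eq_slope f (fun y => a0 + a1 * (3*y^2)) hst
      (Continuous.continuousOn (by continuity)) (fun y _ => hasDerivAt_cubic a0 a1 y)
  obtain ⟨w, hwmem, hw⟩ := hder 0 v hv0
  obtain ⟨s, hsmem, hs⟩ := hder v u hvu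
  obtain ⟨t, htmem, ht⟩ := hder u (1+δ) hub
  have hfw : 0 < a0 + a1 * (3*w^2) := by
    rw [hw]
    apply div_pos _ (by linarith)
    simp only [hf]; rw [hqv]; norm_num; linarith
  have hfs : a0 + a1 * (3*s^2) < 0 := by
    rw [hs]
    apply div_neg_of_neg_of_pos _ (by linarith)
    simp only [hf]; rw [hqu, hqv]; linarith
  have hft : 0 < a0 + a1 * (3*t^2) := by
    rw [ht]
    apply div_pos _ (by linarith)
    simp only [hf]; rw [hqu]; linarith
  have hws : w < s := lt_trans hwmem.2 hsmem.1
  have hst : s < t := lt_trans hsmem.2 htmem.1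
  have hw0 : 0 < w := hwmem.1
  have hs0 : 0 < s := hw0.trans hws
  have h1 : 0 < s^2 - w^2 := by nlinarith
  have h2 : 0 < t^2 - s^2 := by nlinarith
  have ha1neg : a1 < 0 := by nlinarith
  nlinarith

/-- The optimum attains `1-δ` at the right endpoint (equioscillation at `b = 1+δ`). -/
lemma q_endpoint (δ a : ℝ) (hδ0 : 0 < δ) (ha0 : 0 < a) (hab : a < 1+δ)
    (haeps : epsVal 2 a (1+δ) = δ) (α : ℕ → ℝ)
    (hpt : ∀ x ∈ Icc a (1+δ), |1 - oddPoly 2 α x| ≤ δ) :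
    oddPoly 2 α (1+δ) = 1-δ := by
  by_contra hne
  have hbK : (1+δ : ℝ) ∈ Icc a (1+δ) := ⟨hab.le, le_refl _⟩
  have hb1 : 1-δ < oddPoly 2 α (1+δ) := by
    have := (abs_le.mp (hpt _ hbK)).2
    rcases lt_or_eq_of_le (by linarith : 1-δ ≤ oddPoly 2 α (1+δ)) with h | h
    · exact h
    · exact absurd h.symm hne
  set q := oddPoly 2 α with hq
  have hqform : ∀ x, q x = α 0 * x + α 1 * x^3 := by
    intro x; rw [hq, oddPoly_two]
  set Ep := Icc a (1+δ) ∩ {x | q x = 1-δ} with hEp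
  set Em := Icc a (1+δ) ∩ {x | q x = 1+δ} with hEm
  have cq : Continuous q := oddPoly_cont α
  have hEpc : IsCompact Ep := isCompact_Icc.inter_right (isClosed_eq cq continuous_const)
  have hEmc : IsCompact Em := isCompact_Icc.inter_right (isClosed_eq cq continuous_const)
  obtain ⟨u1, hu1K, hu1⟩ := exists_hit_bot δ a hδ0 ha0 hab haeps α hpt
  obtain ⟨v1, hv1K, hv1⟩ := exists_hit_top δ a hδ0 ha0 hab haeps α hpt
  have hEpne : Ep.Nonempty := ⟨u1, hu1K, hu1⟩
  have hEmne : Em.Nonempty := ⟨v1, hv1K, hv1⟩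
  have horder : ∀ u ∈ Ep, ∀ v ∈ Em, u < v := by
    intro u hu v hv
    refine cubic_order δ a (α 0) (α 1) v u hδ0 ha0 hv.1 hu.1 ?_ ?_ ?_
    · rw [← hqform]; exact hv.2
    · rw [← hqform]; exact hu.2
    · rw [← hqform]; exact hb1
  set u0 := sSup Ep with hu0
  set v0 := sInf Em with hv0
  have hu0mem : u0 ∈ Ep := hEpc.sSup_mem hEpne
  have hv0mem : v0 ∈ Em := hEmc.sInf_mem hEmne
  have hu0v0 : u0 < v0 := horder u0 hu0mem v0 hv0mem
  set c := (u0 + v0)/2 with hc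
  have hu0c : u0 < c := by rw [hc]; linarith
  have hcv0 : c < v0 := by rw [hc]; linarith
  have hc0 : 0 < c := lt_trans (lt_of_lt_of_le ha0 hu0mem.1.1) hu0c
  refine sep_lemma δ a hδ0 hab haeps α hpt (fun i => if i = 0 then c^2 else -1) ?_ ?_
  · intro x hx hex
    have hxEp : x ∈ Ep := ⟨hx, by simp only [mem_setOf_eq]; linarith⟩
    have hxu0 : x ≤ u0 := le_csSup hEpc.bddAbove hxEp
    have hx0 : 0 < x := lt_of_lt_of_le ha0 hx.1
    have hxc : x < c := lt_of_le_of_lt hxu0 hu0c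
    rw [oddPoly_two]; norm_num
    nlinarith [mul_pos hx0 (mul_pos (sub_pos.2 hxc) (by linarith : (0:ℝ) < c + x))]
  · intro x hx hex
    have hxEm : x ∈ Em := ⟨hx, by simp only [mem_setOf_eq]; linarith⟩
    have hxv0 : v0 ≤ x := csInf_le hEmc.bddBelow hxEm
    have hx0 : 0 < x := lt_of_lt_of_le ha0 hx.1
    have hxc : c < x := lt_of_lt_of_le hcv0 hxv0
    rw [oddPoly_two]; norm_num
    nlinarith [mul_pos hx0 (mul_pos (sub_pos.2 hxc) (by linarith : (0:ℝ) < c + x))]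

/-- For `d = 2` (cubic polynomials), `q_{2,δ}` maximizes the
derivative at the origin over the class `𝒫_{2,δ}`: `q'_{2,δ}(0) ≥ p'(0)` for every
`p ∈ 𝒫_{2,δ}`. -/
theorem q_maximizes_derivative_at_zero (δ : ℝ) (hδ : δ ∈ Set.Ioo (0:ℝ) 1)
    (a : ℝ) (ha : a ∈ Set.Ioo (0:ℝ) (1 + δ)) (haeps : epsVal 2 a (1 + δ) = δ)
    (α : ℕ → ℝ)
    (hbest : ∀ β : ℕ → ℝ,
      unifErr a (1 + δ) (fun _ => (1:ℝ)) (oddPoly 2 α)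
        ≤ unifErr a (1 + δ) (fun _ => (1:ℝ)) (oddPoly 2 β)) :
    ∀ p : ℝ → ℝ, PClass 2 δ p → deriv p 0 ≤ deriv (oddPoly 2 α) 0 := by
  obtain ⟨hδ0, hδ1⟩ := hδ
  obtain ⟨ha0, hab⟩ := ha
  rintro p ⟨⟨βs, rfl⟩, a', ⟨ha'0, ha'1⟩, hpa', hupper, hlower⟩
  rw [deriv_oddPoly_two, deriv_oddPoly_two]
  have hpt := pointwise_bound δ a hab haeps α hbest
  have hF2 := q_endpoint δ a hδ0 ha0 hab haeps α hpt
  have hqform : ∀ x, oddPoly 2 α x = α 0 * x + α 1 * x^3 := by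
    intro x; rw [oddPoly_two]
  have hpform : ∀ x, oddPoly 2 βs x = βs 0 * x + βs 1 * x^3 := by
    intro x; rw [oddPoly_two]
  rcases le_or_gt a a' with hle | hlt
  · -- a ≤ a' : use x1 = a', x2 = 1+δ
    have ha'K : a' ∈ Icc a (1+δ) := ⟨hle, by linarith⟩
    have hq1 : 1-δ ≤ oddPoly 2 α a' := by
      have := (abs_le.mp (hpt a' ha'K)).2; linarith
    have hp2 : 1-δ ≤ oddPoly 2 βs (1+δ) :=
      (hupper (1+δ) ⟨by linarith, le_refl _⟩).1
    refine core_ineq (βs 0) (βs 1) (α 0) (α 1) a' (1+δ) ha'0 (by linarith) ?_ ?_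
    · rw [← hpform, ← hqform, hpa']; linarith
    · rw [← hpform, ← hqform, hF2]; linarith
  · -- a' < a : use x1 = v (where q = 1+δ), x2 = 1+δ
    obtain ⟨v, hvK, hqv⟩ := exists_hit_top δ a hδ0 ha0 hab haeps α hpt
    have hv0 : 0 < v := lt_of_lt_of_le ha0 hvK.1
    have hvb : v < 1+δ := by
      rcases lt_or_eq_of_le hvK.2 with h | h
      · exact h
      · rw [h] at hqv; rw [hqv] at hF2; linarith
    have hpv : oddPoly 2 βs v ≤ 1+δ :=
      (hupper v ⟨by linarith [hvK.1], hvK.2⟩).2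
    have hp2 : 1-δ ≤ oddPoly 2 βs (1+δ) :=
      (hupper (1+δ) ⟨by linarith, le_refl _⟩).1
    refine core_ineq (βs 0) (βs 1) (α 0) (α 1) v (1+δ) hv0 hvb ?_ ?_
    · rw [← hpform, ← hqform, hqv]; linarith
    · rw [← hpform, ← hqform, hF2]; linarith
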